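/- Let X be a complex Banach space and x ∈ X nonzero. Then x is a smooth point (i.e., there is a unique norm-one functional x* with x*(x) = ‖x‖) if and only if for every y ∈ X with x not Birkhoff-James orthogonal to y, the set of orthogonality pairs O(x,y) equals {(μ, u*), (−μ, −u*)} for some unimodular μ and some norm-one functional u*. -/

import Mathlib

lemma mu_mul_key (a : ℂ) (ha : a ≠ 0) :
    (Complex.I * (starRingEnd ℂ) a / ‖a‖) * a = Complex.I * ‖a‖ := by
  have h : (starRingEnd ℂ) a * a = ((‖a‖ : ℂ)) ^ 2 := by
    rw [mul_comm, Complex.mul_conj']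
  have hna : (‖a‖ : ℂ) ≠ 0 := by
    simpa using norm_ne_zero_iff.mpr ha
  have h2 : Complex.I * (starRingEnd ℂ) a * a = Complex.I * ‖a‖ * ‖a‖ := by
    rw [mul_assoc, h]; ring
  rw [div_mul_eq_mul_div, h2, mul_div_assoc, div_self hna, mul_one]

lemma mu_norm (a : ℂ) (ha : a ≠ 0) :
    ‖Complex.I * (starRingEnd ℂ) a / ‖a‖‖ = 1 := by
  have h : ‖a‖ ≠ 0 := norm_ne_zero_iff.mpr ha
  rw [norm_div, norm_mul, Complex.norm_I, one_mul, RCLike.norm_conj,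
    Complex.norm_real, norm_norm, div_self h]

lemma nu_classify (a ν : ℂ) (ha : a ≠ 0) (hν : ‖ν‖ = 1) (hre : (ν * a).re = 0) :
    ν = Complex.I * (starRingEnd ℂ) a / ‖a‖ ∨
    ν = -(Complex.I * (starRingEnd ℂ) a / ‖a‖) := by
  set z := ν * a with hz
  have hnz : ‖z‖ = ‖a‖ := by rw [hz, norm_mul, hν, one_mul]
  have him : z.im = ‖a‖ ∨ z.im = -‖a‖ := by
    have h1 : z.im ^ 2 = ‖a‖ ^ 2 := by
      have hsq := Complex.sq_norm z
      rw [Complex.normSq_apply, hre] at hsq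
      have h2 : ‖z‖ = ‖a‖ := hnz
      rw [h2] at hsq
      linear_combination -hsq
    exact sq_eq_sq_iff_eq_or_eq_neg.mp h1
  have hz1 : z = Complex.I * ‖a‖ ∨ z = -(Complex.I * ‖a‖) := by
    rcases him with h | h
    · left; apply Complex.ext <;> simp [hre, h]
    · right; apply Complex.ext <;> simp [hre, h]
  rcases hz1 with h | h
  · left
    have hk : ν * a = (Complex.I * (starRingEnd ℂ) a / ‖a‖) * a := by
      rw [← hz, h, mu_mul_key a ha]
    exact mul_right_cancel₀ ha hk
  · right
    have hk : ν * a = (-(Complex.I * (starRingEnd ℂ) a / ‖a‖)) * a := by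
      rw [← hz, h, neg_mul, mu_mul_key a ha]
    exact mul_right_cancel₀ ha hk

theorem smooth_iff_orthogonality_pairs {X : Type*} [NormedAddCommGroup X]
    [NormedSpace ℂ X] [CompleteSpace X] (x : X) (hx : x ≠ 0) :
    (∃! u : X →L[ℂ] ℂ, ‖u‖ = 1 ∧ u x = (‖x‖ : ℂ)) ↔
    (∀ y : X, ¬ (∀ lam : ℂ, ‖x + lam • y‖ ≥ ‖x‖) →
      ∃ (μ : ℂ) (u : X →L[ℂ] ℂ), ‖μ‖ = 1 ∧ ‖u‖ = 1 ∧
        {p : ℂ × (X →L[ℂ] ℂ) |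
          ‖p.1‖ = 1 ∧ ‖p.2‖ = 1 ∧ p.2 x = p.1 * ‖x‖ ∧ (p.2 y).re = 0} =
        {(μ, u), (-μ, -u)}) := by
  constructor
  · rintro ⟨u₀, ⟨hu₀n, hu₀x⟩, huniq⟩ y hy
    have ha : u₀ y ≠ 0 := by
      intro h0
      apply hy
      intro lam
      calc ‖x‖ = ‖u₀ (x + lam • y)‖ := by
            simp [map_add, hu₀x, h0, Complex.norm_real]
        _ ≤ ‖u₀‖ * ‖x + lam • y‖ := u₀.le_opNorm _
        _ = ‖x + lam • y‖ := by rw [hu₀n, one_mul]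
    set a := u₀ y with haa
    set μ := Complex.I * (starRingEnd ℂ) a / ‖a‖ with hμdef
    have hμn : ‖μ‖ = 1 := mu_norm a ha
    have hreμ : (μ * a).re = 0 := by
      rw [hμdef, mu_mul_key a ha]
      simp
    refine ⟨μ, μ • u₀, hμn, ?_, ?_⟩
    · rw [norm_smul μ u₀, hμn, hu₀n, one_mul]
    · apply Set.Subset.antisymm
      · rintro ⟨ν, v⟩ ⟨hνn, hvn, hvx, hvy⟩
        have hν0 : ν ≠ 0 := by intro h; rw [h] at hνn; simp at hνn
        have hveq : ν⁻¹ • v = u₀ := by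
          apply huniq
          constructor
          · rw [norm_smul ν⁻¹ v, norm_inv, hνn, hvn]; norm_num
          · simp [hvx, inv_mul_cancel_left₀ hν0]
        have hv : v = ν • u₀ := by
          rw [← hveq, smul_smul, mul_inv_cancel₀ hν0, one_smul]
        have hre : (ν * a).re = 0 := by
          rw [hv] at hvy
          simpa [haa] using hvy
        rcases nu_classify a ν ha hνn hre with h | h
        · left
          rw [hv, h, ← hμdef]
        · right
          rw [hv, h, ← hμdef, neg_smul μ u₀]
          rfl
      · intro p hp
        rcases hp with rfl | hp
        · refine ⟨hμn, ?_, by simp [hu₀x], ?_⟩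
          · rw [norm_smul μ u₀, hμn, hu₀n, one_mul]
          · simpa [haa] using hreμ
        · rw [Set.mem_singleton_iff] at hp
          subst hp
          refine ⟨by rw [norm_neg]; exact hμn, ?_, ?_, ?_⟩
          · rw [norm_neg, norm_smul μ u₀, hμn, hu₀n, one_mul]
          · simp [hu₀x]
          · have : (-(μ • u₀)) y = -(μ * a) := by simp [haa]
            rw [this]
            simp [hreμ]
  · intro h
    obtain ⟨u₀, hu₀n, hu₀x⟩ := exists_dual_vector ℂ x (norm_ne_zero_iff.mpr hx)
    refine ⟨u₀, ⟨hu₀n, hu₀x⟩, ?_⟩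
    rintro v ⟨hvn, hvx⟩
    have hnorth : ¬ (∀ lam : ℂ, ‖x + lam • x‖ ≥ ‖x‖) := by
      intro hall
      have h1 := hall (-1)
      simp at h1
      exact hx h1
    obtain ⟨μ, u, hμn, hun, hset⟩ := h x hnorth
    have hμ0 : μ ≠ 0 := by intro hh; rw [hh] at hμn; simp at hμn
    have hmem : ∀ w : X →L[ℂ] ℂ, ‖w‖ = 1 → w x = (‖x‖ : ℂ) →
        (Complex.I, Complex.I • w) ∈ ({(μ, u), (-μ, -u)} :
          Set (ℂ × (X →L[ℂ] ℂ))) := by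
      intro w h1 h2
      rw [← hset]
      refine ⟨by simp, ?_, by simp [h2], ?_⟩
      · show ‖Complex.I • w‖ = 1
        rw [norm_smul Complex.I w, h1]; simp
      · show ((Complex.I • w) x).re = 0
        simp [h2, Complex.mul_re]
    have h1 := hmem v hvn hvx
    have h2 := hmem u₀ hu₀n hu₀x
    simp only [Set.mem_insert_iff, Set.mem_singleton_iff, Prod.mk.injEq] at h1 h2
    rcases h1 with ⟨ha1, ha2⟩ | ⟨ha1, ha2⟩ <;> rcases h2 with ⟨hb1, hb2⟩ | ⟨hb1, hb2⟩
    · have heq : Complex.I • v = Complex.I • u₀ := by rw [ha2, hb2]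
      exact smul_right_injective _ Complex.I_ne_zero heq
    · exfalso
      have h3 : μ = -μ := ha1.symm.trans hb1
      exact hμ0 (by linear_combination h3 / 2)
    · exfalso
      have h3 : μ = -μ := hb1.symm.trans ha1
      exact hμ0 (by linear_combination h3 / 2)
    · have heq : Complex.I • v = Complex.I • u₀ := by rw [ha2, hb2]
      exact smul_right_injective _ Complex.I_ne_zero heq
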